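/- Let 1 < m ≤ 2 and consider the unbounded model domain U_m = {(z₁, z₂) ∈ ℂ² : 2 Im z₂ > |Re z₁|^m}, with defining function ρ(z) = |Re z₁|^m − 2 Im z₂, whose boundary is parametrized by Φ : ℝ³ → ℂ², Φ(x, y, t) = (x + iy, t + (i/2)|x|^m). For w = Φ(x, y, t) and z = Φ(x', y', t') one has ⟨∂ρ(w), w − z⟩ = (m/2)|x|^{m−1} sgn(x) · (w₁ − z₁) + i (w₂ − z₂). Define, for compactly supported continuous g : ℝ³ → ℂ and points ζ ∈ ℝ³ at positive distance from the support of g, T g(ζ) = ∫_{ℝ³} g(x, y, t) · ⟨∂ρ(Φ(x, y, t)), Φ(x, y, t) − Φ(ζ)⟩^{−2} dx dy dt. Then for every p with 1 < p < ∞ there is NO constant A > 0 such that (∫_S |T g|ᵖ)^{1/p} ≤ A (∫_{ℝ³} |g|ᵖ)^{1/p} holds for every compactly supported continuous g : ℝ³ → ℂ and every Borel set S ⊂ ℝ³ at positive distance from the support of g. -/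

import Mathlib

open MeasureTheory Complex

noncomputable section

/-- Parametrization `Φ(x, y, t) = (x + iy, t + (i/2)|x|^m)` of the boundary of the model
domain `U_m = {2 Im z₂ > |Re z₁|^m}`. -/
def PhiM (m : ℝ) (ξ : ℝ × ℝ × ℝ) : ℂ × ℂ :=
  ((ξ.1 : ℂ) + (ξ.2.1 : ℂ) * Complex.I, (ξ.2.2 : ℂ) + (Complex.I / 2) * ((|ξ.1| ^ m : ℝ) : ℂ))

/-- The pairing `⟨∂ρ(Φ ξ), Φ ξ − Φ ζ⟩ = (m/2)|x|^{m−1} sgn(x)(w₁ − z₁) + i(w₂ − z₂)`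
for the defining function `ρ(z) = |Re z₁|^m − 2 Im z₂` of `U_m`. -/
def pairM (m : ℝ) (ξ ζ : ℝ × ℝ × ℝ) : ℂ :=
  (((m / 2) * |ξ.1| ^ (m - 1) * Real.sign ξ.1 : ℝ) : ℂ) * ((PhiM m ξ).1 - (PhiM m ζ).1)
    + Complex.I * ((PhiM m ξ).2 - (PhiM m ζ).2)

/-- The Cauchy–Leray-type singular integral operator of the model domain `U_m`. -/
def TM (m : ℝ) (g : ℝ × ℝ × ℝ → ℂ) (ζ : ℝ × ℝ × ℝ) : ℂ :=
  ∫ ξ, g ξ / (pairM m ξ ζ) ^ 2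

namespace S15

/-! ### Auxiliary material for the counterexample. -/

lemma pair_re (m : ℝ) (ξ ζ : ℝ × ℝ × ℝ) :
    (pairM m ξ ζ).re = (m / 2 * |ξ.1| ^ (m - 1) * Real.sign ξ.1) * (ξ.1 - ζ.1)
      - (|ξ.1| ^ m - |ζ.1| ^ m) / 2 := by
  simp [pairM, PhiM, Complex.add_re, Complex.sub_re, Complex.mul_re, Complex.add_im,
    Complex.sub_im, Complex.mul_im, Complex.I_re, Complex.I_im, Complex.ofReal_re,
    Complex.ofReal_im, Complex.div_re, Complex.div_im, Complex.normSq_apply]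
  ring

lemma pair_im (m : ℝ) (ξ ζ : ℝ × ℝ × ℝ) :
    (pairM m ξ ζ).im = (m / 2 * |ξ.1| ^ (m - 1) * Real.sign ξ.1) * (ξ.2.1 - ζ.2.1)
      + (ξ.2.2 - ζ.2.2) := by
  simp [pairM, PhiM, Complex.add_re, Complex.sub_re, Complex.mul_re, Complex.add_im,
    Complex.sub_im, Complex.mul_im, Complex.I_re, Complex.I_im, Complex.ofReal_re,
    Complex.ofReal_im, Complex.div_re, Complex.div_im, Complex.normSq_apply]

/-- clamp to `[0,1]` -/
def cl (v : ℝ) : ℝ := max 0 (min 1 v)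

lemma cl_nonneg (v : ℝ) : 0 ≤ cl v := le_max_left _ _

lemma cl_le_one (v : ℝ) : cl v ≤ 1 := max_le zero_le_one (min_le_left _ _)

lemma cl_of_one_le {v : ℝ} (h : 1 ≤ v) : cl v = 1 := by
  unfold cl
  rw [min_eq_left h, max_eq_right zero_le_one]

lemma cl_of_nonpos {v : ℝ} (h : v ≤ 0) : cl v = 0 := by
  unfold cl
  rw [min_eq_right (h.trans zero_le_one), max_eq_left h]

lemma continuous_cl : Continuous cl :=
  continuous_const.max (continuous_const.min continuous_id)

/-- bump in the `x` variable: `1` on `[-1/2,1/2]`, `0` outside `(-1,1)`. -/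
def b1 (x : ℝ) : ℝ := cl (2 - 2 * |x|)

/-- bump adapted to `[0,L]`: `1` on `[L/4, 3L/4]`, `0` outside `(0,L)`. -/
def b2 (L y : ℝ) : ℝ := cl ((L / 2 - |y - L / 2|) * (4 / L))

lemma b1_one {x : ℝ} (h : |x| ≤ 1 / 2) : b1 x = 1 := cl_of_one_le (by linarith)

lemma b1_zero {x : ℝ} (h : 1 ≤ |x|) : b1 x = 0 := cl_of_nonpos (by linarith)

lemma b2_one {L y : ℝ} (hL : 0 < L) (h : |y - L / 2| ≤ L / 4) : b2 L y = 1 := by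
  apply cl_of_one_le
  have h4L : (0:ℝ) < 4 / L := by positivity
  have h1 : L / 4 ≤ L / 2 - |y - L / 2| := by linarith
  calc (1:ℝ) = L / 4 * (4 / L) := by field_simp
    _ ≤ (L / 2 - |y - L / 2|) * (4 / L) := mul_le_mul_of_nonneg_right h1 h4L.le

lemma b2_zero {L y : ℝ} (hL : 0 < L) (h : y ∉ Set.Icc (0:ℝ) L) : b2 L y = 0 := by
  apply cl_of_nonpos
  have h2 : L / 2 ≤ |y - L / 2| := by
    rw [Set.mem_Icc, not_and_or] at h
    rcases h with h | h
    · push_neg at h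
      rw [abs_sub_comm, abs_of_pos (by linarith)]; linarith
    · push_neg at h
      rw [abs_of_pos (by linarith)]; linarith
  have h4L : (0:ℝ) ≤ 4 / L := by positivity
  exact mul_nonpos_of_nonpos_of_nonneg (by linarith) h4L

lemma continuous_b1 : Continuous b1 :=
  continuous_cl.comp (continuous_const.sub (continuous_const.mul continuous_abs))

lemma continuous_b2 (L : ℝ) : Continuous (b2 L) :=
  continuous_cl.comp
    ((continuous_const.sub ((continuous_id.sub continuous_const).abs)).mul continuous_const)

/-- real-valued version of the test function -/
def gr (L : ℝ) (ξ : ℝ × ℝ × ℝ) : ℝ := b1 ξ.1 * (b2 L ξ.2.1 * b2 L ξ.2.2)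

/-- the complex test function -/
def gfun (L : ℝ) (ξ : ℝ × ℝ × ℝ) : ℂ := ((gr L ξ : ℝ) : ℂ)

lemma gr_nonneg (L : ℝ) (ξ : ℝ × ℝ × ℝ) : 0 ≤ gr L ξ :=
  mul_nonneg (cl_nonneg _) (mul_nonneg (cl_nonneg _) (cl_nonneg _))

lemma gr_le_one (L : ℝ) (ξ : ℝ × ℝ × ℝ) : gr L ξ ≤ 1 := by
  have := cl_nonneg (2 - 2 * |ξ.1|)
  have h1 := cl_le_one (2 - 2 * |ξ.1|)
  have h2 := cl_le_one ((L / 2 - |ξ.2.1 - L / 2|) * (4 / L))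
  have h3 := cl_le_one ((L / 2 - |ξ.2.2 - L / 2|) * (4 / L))
  have h2' := cl_nonneg ((L / 2 - |ξ.2.1 - L / 2|) * (4 / L))
  have h3' := cl_nonneg ((L / 2 - |ξ.2.2 - L / 2|) * (4 / L))
  unfold gr b1 b2
  have h23 : cl ((L / 2 - |ξ.2.1 - L / 2|) * (4 / L)) * cl ((L / 2 - |ξ.2.2 - L / 2|) * (4 / L)) ≤ 1 :=
    mul_le_one₀ h2 h3' h3
  nlinarith

lemma gfun_continuous (L : ℝ) : Continuous (gfun L) :=
  Complex.continuous_ofReal.comp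
    ((continuous_b1.comp continuous_fst).mul
      (((continuous_b2 L).comp (continuous_snd.fst)).mul
        ((continuous_b2 L).comp (continuous_snd.snd))))

/-- the support box -/
def KK (L : ℝ) : Set (ℝ × ℝ × ℝ) :=
  Set.Icc (-1 : ℝ) 1 ×ˢ (Set.Icc (0:ℝ) L ×ˢ Set.Icc (0:ℝ) L)

/-- the inner box on which `g = 1` -/
def K0 (L : ℝ) : Set (ℝ × ℝ × ℝ) :=
  Set.Icc (-(1/2) : ℝ) (1/2) ×ˢ (Set.Icc (L/4) (3*L/4) ×ˢ Set.Icc (L/4) (3*L/4))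

/-- the far set on which we evaluate `T g` -/
def SS (R L : ℝ) : Set (ℝ × ℝ × ℝ) :=
  Set.Icc R (2*R) ×ˢ (Set.Icc (0:ℝ) L ×ˢ Set.Icc (0:ℝ) L)

lemma gfun_zero_of_not_mem {L : ℝ} (hL : 0 < L) {ξ : ℝ × ℝ × ℝ} (h : ξ ∉ KK L) :
    gfun L ξ = 0 := by
  unfold gfun gr
  rw [KK, Set.mem_prod, Set.mem_prod, not_and_or] at h
  rcases h with h | h
  · have h1 : 1 ≤ |ξ.1| := by
      rw [Set.mem_Icc] at h; rw [le_abs]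
      rcases not_and_or.mp h with h | h
      · right; push_neg at h; linarith
      · left; push_neg at h; linarith
    rw [b1_zero h1]; simp
  · rcases not_and_or.mp h with h | h
    · rw [b2_zero hL h]; simp
    · rw [b2_zero hL h]; simp

lemma gfun_one_of_mem {L : ℝ} (hL : 0 < L) {ξ : ℝ × ℝ × ℝ} (h : ξ ∈ K0 L) :
    gfun L ξ = 1 := by
  rw [K0, Set.mem_prod, Set.mem_prod] at h
  obtain ⟨hx, hy, ht⟩ := h
  rw [Set.mem_Icc] at hx hy ht
  unfold gfun gr
  rw [b1_one (abs_le.mpr ⟨by linarith, by linarith⟩),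
    b2_one hL (abs_le.mpr ⟨by linarith, by linarith⟩),
    b2_one hL (abs_le.mpr ⟨by linarith, by linarith⟩)]
  norm_num

lemma measurable_realSign : Measurable Real.sign := by
  have : Real.sign = fun r : ℝ => if r < 0 then (-1:ℝ) else if 0 < r then 1 else 0 := rfl
  rw [this]
  exact Measurable.ite (measurableSet_lt measurable_id measurable_const) measurable_const
    (Measurable.ite (measurableSet_lt measurable_const measurable_id) measurable_const
      measurable_const)

lemma measurable_pair (m : ℝ) (hm : 1 ≤ m) (ζ : ℝ × ℝ × ℝ) :
    Measurable fun ξ : ℝ × ℝ × ℝ => pairM m ξ ζ := by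
  have e1 : Measurable fun ξ : ℝ × ℝ × ℝ => ξ.1 := measurable_fst
  have e2 : Measurable fun ξ : ℝ × ℝ × ℝ => ξ.2.1 := measurable_fst.comp measurable_snd
  have e3 : Measurable fun ξ : ℝ × ℝ × ℝ => ξ.2.2 := measurable_snd.comp measurable_snd
  have habs : ∀ q : ℝ, 0 ≤ q → Measurable fun ξ : ℝ × ℝ × ℝ => |ξ.1| ^ q := fun q hq =>
    (Real.continuous_rpow_const hq).measurable.comp (continuous_abs.measurable.comp e1)
  unfold pairM PhiM
  apply Measurable.add
  · apply Measurable.mul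
    · exact Complex.measurable_ofReal.comp
        ((measurable_const.mul (habs (m - 1) (by linarith))).mul (measurable_realSign.comp e1))
    · exact ((Complex.measurable_ofReal.comp e1).add
        ((Complex.measurable_ofReal.comp e2).mul_const Complex.I)).sub measurable_const
  · apply Measurable.const_mul
    exact ((Complex.measurable_ofReal.comp e3).add
      (measurable_const.mul (Complex.measurable_ofReal.comp (habs m (by linarith))))).sub
      measurable_const

/-- real part of the inverse of the square of a complex number close to positive reals -/
lemma inv_sq_re_ge {z : ℂ} {σ : ℝ} (hσ : 0 < σ) (h1 : σ ≤ z.re) (h2 : |z.im| ≤ z.re / 10) :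
    1 / (2 * z.re ^ 2) ≤ ((z ^ 2)⁻¹).re := by
  have hs : 0 < z.re := hσ.trans_le h1
  have hu2 : z.im ^ 2 ≤ z.re ^ 2 / 100 := by
    have := abs_nonneg z.im
    nlinarith [_root_.sq_abs z.im, abs_le.mp h2]
  have hre : (z ^ 2).re = z.re * z.re - z.im * z.im := by
    rw [sq]; exact Complex.mul_re z z
  have him : (z ^ 2).im = z.re * z.im + z.im * z.re := by
    rw [sq]; exact Complex.mul_im z z
  have hnum : 0 < z.re * z.re - z.im * z.im := by nlinarith
  rw [Complex.inv_re, Complex.normSq_apply, hre, him]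
  rw [div_le_div_iff₀ (by nlinarith) (by nlinarith [sq_nonneg (z.re * z.im + z.im * z.re)])]
  nlinarith [sq_nonneg z.im, sq_nonneg z.re, hs, hu2]

lemma inv_sq_norm_le {z : ℂ} {σ : ℝ} (hσ : 0 < σ) (h1 : σ ≤ z.re) :
    ‖(z ^ 2)⁻¹‖ ≤ 1 / σ ^ 2 := by
  have hz : σ ≤ ‖z‖ := h1.trans (Complex.re_le_norm z)
  rw [norm_inv, norm_pow]
  rw [div_eq_mul_inv, one_mul]
  apply inv_anti₀ (by positivity)
  exact pow_le_pow_left₀ hσ.le hz 2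

section main

variable {m R : ℝ}

/-- All the structural bounds on the pairing on the relevant boxes. -/
lemma pair_est (hm1 : 1 < m) (hm2 : m ≤ 2) (hR40 : (40:ℝ) ^ ((m - 1)⁻¹) ≤ R) (hR2 : 2 ≤ R)
    {ξ ζ : ℝ × ℝ × ℝ} (hξ : ξ ∈ KK (R ^ m / 100)) (hζ : ζ ∈ SS R (R ^ m / 100)) :
    R ^ m / 3 ≤ (pairM m ξ ζ).re ∧ (pairM m ξ ζ).re ≤ 3 * R ^ m ∧
      |(pairM m ξ ζ).im| ≤ (pairM m ξ ζ).re / 10 := by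
  have hRpos : (0:ℝ) < R := by linarith
  have hM : (0:ℝ) < R ^ m := Real.rpow_pos_of_pos hRpos m
  have h40 : (40:ℝ) ≤ R ^ (m - 1) := by
    have h := Real.rpow_le_rpow (Real.rpow_nonneg (by norm_num) _) hR40 (by linarith : (0:ℝ) ≤ m - 1)
    rwa [← Real.rpow_mul (by norm_num : (0:ℝ) ≤ 40), inv_mul_cancel₀ (by linarith : m - 1 ≠ 0),
      Real.rpow_one] at h
  have hM40 : 40 * R ≤ R ^ m := by
    have hsplit : R ^ (m - 1) * R = R ^ m := by
      have h := (Real.rpow_add hRpos (m - 1) 1).symm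
      rw [Real.rpow_one, show m - 1 + 1 = m by ring] at h
      exact h
    rw [← hsplit]
    exact mul_le_mul_of_nonneg_right h40 hRpos.le
  rw [KK, Set.mem_prod, Set.mem_prod] at hξ
  rw [SS, Set.mem_prod, Set.mem_prod] at hζ
  obtain ⟨hx, hy, ht⟩ := hξ
  obtain ⟨hx', hy', ht'⟩ := hζ
  rw [Set.mem_Icc] at hx hy ht hx' hy' ht'
  have habsx : |ξ.1| ≤ 1 := abs_le.mpr ⟨hx.1, hx.2⟩
  have hCabs : |m / 2 * |ξ.1| ^ (m - 1) * Real.sign ξ.1| ≤ 1 := by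
    have h1 : |ξ.1| ^ (m - 1) ≤ 1 := Real.rpow_le_one (abs_nonneg ξ.1) habsx (by linarith)
    have h1' : (0:ℝ) ≤ |ξ.1| ^ (m - 1) := Real.rpow_nonneg (abs_nonneg ξ.1) _
    have hsgn : |Real.sign ξ.1| ≤ 1 := by
      rcases Real.sign_apply_eq ξ.1 with h | h | h <;> rw [h] <;> norm_num
    have hsgn' : (0:ℝ) ≤ |Real.sign ξ.1| := abs_nonneg _
    rw [abs_mul, abs_mul, _root_.abs_of_nonneg (by linarith : (0:ℝ) ≤ m / 2),
      _root_.abs_of_nonneg h1']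
    exact mul_le_one₀ (mul_le_one₀ (by linarith) h1' h1) hsgn' hsgn
  have hx'pos : 0 < ζ.1 := by linarith
  have habsx' : |ζ.1| = ζ.1 := abs_of_pos hx'pos
  have hxm_lb : R ^ m ≤ |ζ.1| ^ m := by
    rw [habsx']
    exact Real.rpow_le_rpow hRpos.le hx'.1 (by linarith)
  have hxm_ub : |ζ.1| ^ m ≤ 4 * R ^ m := by
    rw [habsx']
    calc ζ.1 ^ m ≤ (2 * R) ^ m := Real.rpow_le_rpow (by linarith) hx'.2 (by linarith)
      _ = 2 ^ m * R ^ m := Real.mul_rpow (by norm_num) hRpos.le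
      _ ≤ 4 * R ^ m := by
          have h2m : (2:ℝ) ^ m ≤ 2 ^ (2:ℝ) := Real.rpow_le_rpow_of_exponent_le one_le_two hm2
          have h4 : (2:ℝ) ^ (2:ℝ) = 4 := by
            rw [show (2:ℝ) = ((2:ℕ):ℝ) by norm_num, Real.rpow_natCast]; norm_num
          nlinarith
  have hxm1 : |ξ.1| ^ m ≤ 1 := Real.rpow_le_one (abs_nonneg ξ.1) habsx (by linarith)
  have hxm0 : (0:ℝ) ≤ |ξ.1| ^ m := Real.rpow_nonneg (abs_nonneg ξ.1) _
  have hxx' : |ξ.1 - ζ.1| ≤ 2 * R + 1 := abs_le.mpr ⟨by linarith, by linarith⟩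
  have hCdx : |(m / 2 * |ξ.1| ^ (m - 1) * Real.sign ξ.1) * (ξ.1 - ζ.1)| ≤ 2 * R + 1 := by
    rw [abs_mul]
    calc |m / 2 * |ξ.1| ^ (m - 1) * Real.sign ξ.1| * |ξ.1 - ζ.1| ≤ 1 * (2 * R + 1) :=
          mul_le_mul hCabs hxx' (abs_nonneg _) zero_le_one
      _ = 2 * R + 1 := one_mul _
  have hre := pair_re m ξ ζ
  have him := pair_im m ξ ζ
  have hs1 : -(2 * R + 1) ≤ (m / 2 * |ξ.1| ^ (m - 1) * Real.sign ξ.1) * (ξ.1 - ζ.1) := by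
    have := neg_abs_le ((m / 2 * |ξ.1| ^ (m - 1) * Real.sign ξ.1) * (ξ.1 - ζ.1))
    linarith
  have hs2 : (m / 2 * |ξ.1| ^ (m - 1) * Real.sign ξ.1) * (ξ.1 - ζ.1) ≤ 2 * R + 1 := by
    have := le_abs_self ((m / 2 * |ξ.1| ^ (m - 1) * Real.sign ξ.1) * (ξ.1 - ζ.1))
    linarith
  have hlb : R ^ m / 3 ≤ (pairM m ξ ζ).re := by rw [hre]; linarith
  have hub : (pairM m ξ ζ).re ≤ 3 * R ^ m := by rw [hre]; linarith
  refine ⟨hlb, hub, ?_⟩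
  have hyy' : |ξ.2.1 - ζ.2.1| ≤ R ^ m / 100 := abs_le.mpr ⟨by linarith, by linarith⟩
  have htt' : |ξ.2.2 - ζ.2.2| ≤ R ^ m / 100 := abs_le.mpr ⟨by linarith, by linarith⟩
  have hCy : |(m / 2 * |ξ.1| ^ (m - 1) * Real.sign ξ.1) * (ξ.2.1 - ζ.2.1)| ≤ R ^ m / 100 := by
    rw [abs_mul]
    calc |m / 2 * |ξ.1| ^ (m - 1) * Real.sign ξ.1| * |ξ.2.1 - ζ.2.1| ≤ 1 * (R ^ m / 100) :=
          mul_le_mul hCabs hyy' (abs_nonneg _) zero_le_one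
      _ = R ^ m / 100 := one_mul _
  have him_le : |(pairM m ξ ζ).im| ≤ 2 * (R ^ m / 100) := by
    rw [him]
    calc |(m / 2 * |ξ.1| ^ (m - 1) * Real.sign ξ.1) * (ξ.2.1 - ζ.2.1) + (ξ.2.2 - ζ.2.2)|
        ≤ |(m / 2 * |ξ.1| ^ (m - 1) * Real.sign ξ.1) * (ξ.2.1 - ζ.2.1)| + |ξ.2.2 - ζ.2.2| :=
          abs_add_le _ _
      _ ≤ 2 * (R ^ m / 100) := by linarith
  linarith

lemma KK_measurable (L : ℝ) : MeasurableSet (KK L) :=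
  measurableSet_Icc.prod (measurableSet_Icc.prod measurableSet_Icc)

lemma K0_measurable (L : ℝ) : MeasurableSet (K0 L) :=
  measurableSet_Icc.prod (measurableSet_Icc.prod measurableSet_Icc)

lemma SS_measurable (R L : ℝ) : MeasurableSet (SS R L) :=
  measurableSet_Icc.prod (measurableSet_Icc.prod measurableSet_Icc)

lemma KK_volume (L : ℝ) : volume (KK L) = ENNReal.ofReal 2 * (ENNReal.ofReal L * ENNReal.ofReal L) := by
  rw [KK, MeasureTheory.Measure.volume_eq_prod, Measure.prod_prod,
    MeasureTheory.Measure.volume_eq_prod, Measure.prod_prod, Real.volume_Icc, Real.volume_Icc,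
    sub_zero, show (1:ℝ) - (-1) = 2 by norm_num]

lemma K0_volume (L : ℝ) :
    volume (K0 L) = ENNReal.ofReal 1 * (ENNReal.ofReal (L/2) * ENNReal.ofReal (L/2)) := by
  rw [K0, MeasureTheory.Measure.volume_eq_prod, Measure.prod_prod,
    MeasureTheory.Measure.volume_eq_prod, Measure.prod_prod, Real.volume_Icc, Real.volume_Icc,
    show (1:ℝ)/2 - -(1/2) = 1 by norm_num, show 3*L/4 - L/4 = L/2 by ring]

lemma SS_volume (R L : ℝ) :
    volume (SS R L) = ENNReal.ofReal R * (ENNReal.ofReal L * ENNReal.ofReal L) := by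
  rw [SS, MeasureTheory.Measure.volume_eq_prod, Measure.prod_prod,
    MeasureTheory.Measure.volume_eq_prod, Measure.prod_prod, Real.volume_Icc, Real.volume_Icc,
    sub_zero, show 2*R - R = R by ring]

lemma K0_subset_KK {L : ℝ} (hL : 0 ≤ L) : K0 L ⊆ KK L := by
  unfold K0 KK
  apply Set.prod_mono (Set.Icc_subset_Icc (by norm_num) (by norm_num))
  exact Set.prod_mono (Set.Icc_subset_Icc (by linarith) (by linarith))
    (Set.Icc_subset_Icc (by linarith) (by linarith))

/-- The key lower bound: on all of `SS R (R^m/100)`, the real part of `T g` is at least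
an absolute constant. -/
lemma TM_re_ge (hm1 : 1 < m) (hm2 : m ≤ 2) (hR40 : (40:ℝ) ^ ((m - 1)⁻¹) ≤ R) (hR2 : 2 ≤ R)
    {ζ : ℝ × ℝ × ℝ} (hζ : ζ ∈ SS R (R ^ m / 100)) :
    1/720000 ≤ (TM m (gfun (R ^ m / 100)) ζ).re := by
  have hRpos : (0:ℝ) < R := by linarith
  have hM : (0:ℝ) < R ^ m := Real.rpow_pos_of_pos hRpos m
  have hLpos : (0:ℝ) < R ^ m / 100 := by positivity
  have hker : ∀ ξ ∈ KK (R ^ m / 100),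
      1/(18*(R ^ m)^2) ≤ (((pairM m ξ ζ) ^ 2)⁻¹).re ∧
        ‖((pairM m ξ ζ) ^ 2)⁻¹‖ ≤ 9/(R ^ m)^2 := by
    intro ξ hξ
    obtain ⟨hlb, hub, him⟩ := pair_est hm1 hm2 hR40 hR2 hξ hζ
    have h1 : 1/(2*(pairM m ξ ζ).re^2) ≤ (((pairM m ξ ζ) ^ 2)⁻¹).re :=
      inv_sq_re_ge (show (0:ℝ) < R ^ m / 3 by positivity) hlb him
    refine ⟨le_trans ?_ h1, ?_⟩
    · rw [div_le_div_iff₀ (by positivity) (by nlinarith)]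
      nlinarith
    · have h2 := inv_sq_norm_le (show (0:ℝ) < R ^ m / 3 by positivity) hlb
      calc ‖((pairM m ξ ζ) ^ 2)⁻¹‖ ≤ 1/(R ^ m/3)^2 := h2
        _ = 9/(R ^ m)^2 := by field_simp; ring
  have hfm : AEStronglyMeasurable (fun ξ => gfun (R ^ m / 100) ξ / (pairM m ξ ζ) ^ 2) volume :=
    ((gfun_continuous _).measurable.div
      ((measurable_pair m (by linarith) ζ).pow_const 2)).aestronglyMeasurable
  have hvolK : volume (KK (R ^ m / 100)) < ⊤ := by
    rw [KK_volume]
    exact ENNReal.mul_lt_top ENNReal.ofReal_lt_top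
      (ENNReal.mul_lt_top ENNReal.ofReal_lt_top ENNReal.ofReal_lt_top)
  have hint : Integrable (fun ξ => gfun (R ^ m / 100) ξ / (pairM m ξ ζ) ^ 2) := by
    apply Integrable.mono'
      (g := (KK (R ^ m / 100)).indicator (fun _ => 9/(R ^ m)^2)) ?_ hfm ?_
    · exact (integrableOn_const hvolK.ne).integrable_indicator (KK_measurable _)
    · filter_upwards with ξ
      by_cases hξ : ξ ∈ KK (R ^ m / 100)
      · rw [Set.indicator_of_mem hξ, div_eq_mul_inv, norm_mul]
        have hg1 : ‖gfun (R ^ m / 100) ξ‖ ≤ 1 := by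
          rw [gfun, Complex.norm_real, Real.norm_eq_abs,
            _root_.abs_of_nonneg (gr_nonneg _ _)]
          exact gr_le_one _ _
        calc ‖gfun (R ^ m / 100) ξ‖ * ‖((pairM m ξ ζ) ^ 2)⁻¹‖ ≤ 1 * (9/(R ^ m)^2) :=
              mul_le_mul hg1 (hker ξ hξ).2 (norm_nonneg _) zero_le_one
          _ = 9/(R ^ m)^2 := one_mul _
      · rw [Set.indicator_of_notMem hξ, gfun_zero_of_not_mem hLpos hξ, zero_div, norm_zero]
  have hpt : ∀ ξ, (K0 (R ^ m / 100)).indicator (fun _ => 1/(18*(R ^ m)^2)) ξ ≤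
      ((gfun (R ^ m / 100) ξ / (pairM m ξ ζ) ^ 2)).re := by
    intro ξ
    by_cases h0 : ξ ∈ K0 (R ^ m / 100)
    · rw [Set.indicator_of_mem h0]
      have hξK : ξ ∈ KK (R ^ m / 100) := K0_subset_KK hLpos.le h0
      rw [gfun_one_of_mem hLpos h0, one_div, one_div]
      have h := (hker ξ hξK).1
      rw [one_div] at h
      exact h
    · rw [Set.indicator_of_notMem h0]
      by_cases hK : ξ ∈ KK (R ^ m / 100)
      · rw [gfun, div_eq_mul_inv, Complex.re_ofReal_mul]
        exact mul_nonneg (gr_nonneg _ _) (le_trans (by positivity) (hker ξ hK).1)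
      · rw [gfun_zero_of_not_mem hLpos hK, zero_div, Complex.zero_re]
  have hTre : (TM m (gfun (R ^ m / 100)) ζ).re
      = ∫ ξ, ((gfun (R ^ m / 100) ξ / (pairM m ξ ζ) ^ 2)).re := by
    rw [TM]
    have := integral_re (μ := (volume : Measure (ℝ × ℝ × ℝ))) hint
    simp only [RCLike.re_to_complex] at this
    exact this.symm
  have hind : Integrable ((K0 (R ^ m / 100)).indicator (fun _ => 1/(18*(R ^ m)^2))) := by
    apply (integrableOn_const (ne_of_lt ?_)).integrable_indicator (K0_measurable _)
    rw [K0_volume]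
    exact ENNReal.mul_lt_top ENNReal.ofReal_lt_top
      (ENNReal.mul_lt_top ENNReal.ofReal_lt_top ENNReal.ofReal_lt_top)
  have hre_int : Integrable fun ξ => ((gfun (R ^ m / 100) ξ / (pairM m ξ ζ) ^ 2)).re := by
    have := hint.re
    simpa only [RCLike.re_to_complex] using this
  have hmono := integral_mono hind hre_int hpt
  rw [hTre]
  refine le_trans ?_ hmono
  rw [integral_indicator_const _ (K0_measurable _), Measure.real, K0_volume, smul_eq_mul]
  rw [ENNReal.toReal_mul, ENNReal.toReal_mul, ENNReal.toReal_ofReal (by norm_num : (0:ℝ) ≤ 1),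
    ENNReal.toReal_ofReal (by positivity : (0:ℝ) ≤ R ^ m / 100 / 2)]
  rw [show (1:ℝ) * (R ^ m / 100 / 2 * (R ^ m / 100 / 2)) * (1 / (18 * (R ^ m) ^ 2))
    = (R ^ m) ^ 2 / ((R ^ m) ^ 2 * 720000) by ring]
  rw [div_le_div_iff₀ (by norm_num) (by positivity)]
  nlinarith

end main

end S15

/-- For every `1 < m ≤ 2` and every `1 < p < ∞`, the model operator `T`
of the unbounded domain `U_m` admits no restricted `Lᵖ` bound: there is no `A > 0` such
that `(∫_S |T g|ᵖ)^{1/p} ≤ A (∫ |g|ᵖ)^{1/p}` for all compactly supported continuous `g`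
and all Borel sets `S` at positive distance from the support of `g`. -/
theorem statement15 (m : ℝ) (hm1 : 1 < m) (hm2 : m ≤ 2) :
    ∀ p : ℝ, 1 < p →
      ¬ ∃ A : ℝ, 0 < A ∧
        ∀ g : ℝ × ℝ × ℝ → ℂ, Continuous g → HasCompactSupport g →
          ∀ S : Set (ℝ × ℝ × ℝ), MeasurableSet S →
            (∃ δ : ℝ, 0 < δ ∧ ∀ ζ ∈ S, ∀ ξ ∈ tsupport g, δ ≤ dist ζ ξ) →
            ∫⁻ ζ in S, (‖TM m g ζ‖₊ : ENNReal) ^ p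
              ≤ ENNReal.ofReal A ^ p * ∫⁻ ξ, (‖g ξ‖₊ : ENNReal) ^ p := by
  intro p hp
  rintro ⟨A, hA, hbound⟩
  have hc₀ : (0:ℝ) < 1/720000 := by norm_num
  set c₀ : ℝ := 1/720000 with hc₀def
  set R : ℝ := max ((40:ℝ) ^ ((m - 1)⁻¹)) (max (2 * (A / c₀) ^ p + 2) 2) with hRdef
  have hR40 : (40:ℝ) ^ ((m - 1)⁻¹) ≤ R := le_max_left _ _
  have hR2 : (2:ℝ) ≤ R := le_trans (le_max_right _ 2) (le_max_right _ _)
  have hRA : 2 * (A / c₀) ^ p + 2 ≤ R := le_trans (le_max_left _ 2) (le_max_right _ _)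
  have hRpos : (0:ℝ) < R := by linarith
  have hM : (0:ℝ) < R ^ m := Real.rpow_pos_of_pos hRpos m
  set L : ℝ := R ^ m / 100 with hLdef
  have hLpos : (0:ℝ) < L := by rw [hLdef]; positivity
  have hgc : Continuous (S15.gfun L) := S15.gfun_continuous L
  have hKcomp : IsCompact (S15.KK L) := isCompact_Icc.prod (isCompact_Icc.prod isCompact_Icc)
  have hgsupp : HasCompactSupport (S15.gfun L) :=
    HasCompactSupport.intro hKcomp (fun ξ hξ => S15.gfun_zero_of_not_mem hLpos hξ)
  have htsupp : tsupport (S15.gfun L) ⊆ S15.KK L := by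
    apply closure_minimal ?_ (isClosed_Icc.prod (isClosed_Icc.prod isClosed_Icc))
    intro ξ hξ
    by_contra h
    exact hξ (S15.gfun_zero_of_not_mem hLpos h)
  have hdist : ∃ δ : ℝ, 0 < δ ∧
      ∀ ζ ∈ S15.SS R L, ∀ ξ ∈ tsupport (S15.gfun L), δ ≤ dist ζ ξ := by
    refine ⟨1, one_pos, fun ζ hζ ξ hξ => ?_⟩
    have hξK := htsupp hξ
    rw [S15.KK, Set.mem_prod] at hξK
    rw [S15.SS, Set.mem_prod] at hζ
    have h1 := hξK.1
    have h2 := hζ.1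
    rw [Set.mem_Icc] at h1 h2
    calc (1:ℝ) ≤ |ζ.1 - ξ.1| := by rw [le_abs]; left; linarith
      _ = dist ζ.1 ξ.1 := (Real.dist_eq _ _).symm
      _ ≤ dist ζ ξ := by rw [Prod.dist_eq]; exact le_max_left _ _
  have key := hbound (S15.gfun L) hgc hgsupp (S15.SS R L) (S15.SS_measurable R L) hdist
  have hTlow : ∀ ζ ∈ S15.SS R L,
      ENNReal.ofReal c₀ ^ p ≤ (‖TM m (S15.gfun L) ζ‖₊ : ENNReal) ^ p := by
    intro ζ hζ
    apply ENNReal.rpow_le_rpow ?_ (by linarith : (0:ℝ) ≤ p)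
    rw [← enorm_eq_nnnorm, ← ofReal_norm]
    apply ENNReal.ofReal_le_ofReal
    have hζ' : ζ ∈ S15.SS R (R ^ m / 100) := by rw [← hLdef]; exact hζ
    have h := S15.TM_re_ge (m := m) (R := R) hm1 hm2 hR40 hR2 hζ'
    rw [← hLdef] at h
    calc c₀ ≤ (TM m (S15.gfun L) ζ).re := h
      _ ≤ ‖TM m (S15.gfun L) ζ‖ :=
        Complex.re_le_norm _
  have hLHS : ENNReal.ofReal c₀ ^ p * volume (S15.SS R L)
      ≤ ∫⁻ ζ in S15.SS R L, (‖TM m (S15.gfun L) ζ‖₊ : ENNReal) ^ p := by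
    rw [← setLIntegral_const (S15.SS R L) (ENNReal.ofReal c₀ ^ p)]
    exact setLIntegral_mono' (S15.SS_measurable R L) hTlow
  have hgp : ∫⁻ ξ, (‖S15.gfun L ξ‖₊ : ENNReal) ^ p ≤ volume (S15.KK L) := by
    have hptw : ∀ ξ, (‖S15.gfun L ξ‖₊ : ENNReal) ^ p ≤ (S15.KK L).indicator (fun _ => 1) ξ := by
      intro ξ
      by_cases hξ : ξ ∈ S15.KK L
      · rw [Set.indicator_of_mem hξ]
        apply ENNReal.rpow_le_one ?_ (by linarith : (0:ℝ) ≤ p)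
        rw [← enorm_eq_nnnorm, ← ofReal_norm]
        apply ENNReal.ofReal_le_one.mpr
        rw [S15.gfun, Complex.norm_real, Real.norm_eq_abs,
          _root_.abs_of_nonneg (S15.gr_nonneg _ _)]
        exact S15.gr_le_one _ _
      · rw [Set.indicator_of_notMem hξ, S15.gfun_zero_of_not_mem hLpos hξ]
        simp [ENNReal.zero_rpow_of_pos (by linarith : (0:ℝ) < p)]
    calc ∫⁻ ξ, (‖S15.gfun L ξ‖₊ : ENNReal) ^ p
        ≤ ∫⁻ ξ, (S15.KK L).indicator (fun _ => 1) ξ := lintegral_mono hptw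
      _ = volume (S15.KK L) := lintegral_indicator_one (S15.KK_measurable L)
  have hchain : ENNReal.ofReal c₀ ^ p * volume (S15.SS R L)
      ≤ ENNReal.ofReal A ^ p * volume (S15.KK L) :=
    le_trans hLHS (le_trans key (mul_le_mul_right hgp _))
  rw [S15.SS_volume, S15.KK_volume] at hchain
  rw [show ENNReal.ofReal c₀ ^ p * (ENNReal.ofReal R * (ENNReal.ofReal L * ENNReal.ofReal L))
      = ENNReal.ofReal c₀ ^ p * ENNReal.ofReal R * (ENNReal.ofReal L * ENNReal.ofReal L) by ring,
    show ENNReal.ofReal A ^ p * (ENNReal.ofReal 2 * (ENNReal.ofReal L * ENNReal.ofReal L))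
      = ENNReal.ofReal A ^ p * ENNReal.ofReal 2 * (ENNReal.ofReal L * ENNReal.ofReal L) by ring]
    at hchain
  have hV0 : ENNReal.ofReal L * ENNReal.ofReal L ≠ 0 := by
    have : ENNReal.ofReal L ≠ 0 := by
      simp only [ne_eq, ENNReal.ofReal_eq_zero, not_le]
      linarith
    exact mul_ne_zero this this
  have hVtop : ENNReal.ofReal L * ENNReal.ofReal L ≠ ⊤ :=
    ENNReal.mul_ne_top ENNReal.ofReal_ne_top ENNReal.ofReal_ne_top
  have hfin := (ENNReal.mul_le_mul_iff_left hV0 hVtop).mp hchain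
  rw [ENNReal.ofReal_rpow_of_pos hc₀, ENNReal.ofReal_rpow_of_pos hA,
    ← ENNReal.ofReal_mul (by positivity : (0:ℝ) ≤ c₀ ^ p),
    ← ENNReal.ofReal_mul (by positivity : (0:ℝ) ≤ A ^ p),
    ENNReal.ofReal_le_ofReal_iff (by positivity)] at hfin
  have hApos : (0:ℝ) < A ^ p := Real.rpow_pos_of_pos hA p
  have hcp : (0:ℝ) < c₀ ^ p := Real.rpow_pos_of_pos hc₀ p
  have hmul : c₀ ^ p * (2 * (A / c₀) ^ p + 2) ≤ c₀ ^ p * R :=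
    mul_le_mul_of_nonneg_left hRA hcp.le
  rw [Real.div_rpow hA.le hc₀.le] at hmul
  have hsimp : c₀ ^ p * (2 * (A ^ p / c₀ ^ p) + 2) = 2 * A ^ p + 2 * c₀ ^ p := by
    field_simp
  rw [hsimp] at hmul
  linarith

end
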